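/- Let S be a string and let P, Q, R be patterns with P a prefix of Q and Q a prefix of R. If (i, j) is a consecutive occurrence of P in S and also a consecutive occurrence of R in S, then (i, j) is a consecutive occurrence of Q in S. (Hence, along any chain of patterns each a prefix of the next, the set of indices d for which a fixed pair (i, j) is a consecutive occurrence of the d-th pattern is an interval of consecutive integers.) -/

import Mathlib

variable {α : Type*}

/-- `i` is an occurrence of pattern `P` in string `S`. -/
def IsOcc (S P : List α) (i : ℕ) : Prop :=
  i + P.length ≤ S.length ∧ ∀ t < P.length, S[i + t]? = P[t]?

/-- The set of occurrences of `P` in `S`. -/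
def OccSet (S P : List α) : Set ℕ := {i | IsOcc S P i}

/-- `(i, j)` is a consecutive occurrence of `P` in `S`. -/
def IsConsec (S P : List α) (i j : ℕ) : Prop :=
  i < j ∧ IsOcc S P i ∧ IsOcc S P j ∧ ∀ k, i < k → k < j → ¬ IsOcc S P k

/-- The set of consecutive occurrences of `P` in `S`. -/
def DSet (S P : List α) : Set (ℕ × ℕ) := {p | IsConsec S P p.1 p.2}

lemma isOcc_of_prefix {S P Q : List α} {i : ℕ} (hPQ : P <+: Q) (h : IsOcc S Q i) :
    IsOcc S P i := by
  obtain ⟨T, rfl⟩ := hPQ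
  obtain ⟨hlen, hget⟩ := h
  constructor
  · have := @List.length_append _ P T ▸ hlen
    omega
  · intro t ht
    have ht' : t < (P ++ T).length := by simp; omega
    rw [hget t ht', List.getElem?_append, if_pos ht]

/-- If `P` is a prefix of `Q` and `Q` of `R`, and `(i,j)` is a consecutive occurrence of both
`P` and `R`, then it is also a consecutive occurrence of `Q`. -/
theorem stmt_2 (S P Q R : List α) (hPQ : P <+: Q) (hQR : Q <+: R) (i j : ℕ)
    (hP : IsConsec S P i j) (hR : IsConsec S R i j) :
    IsConsec S Q i j := by
  obtain ⟨hij, _, _, hPgap⟩ := hP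
  obtain ⟨_, hRi, hRj, _⟩ := hR
  exact ⟨hij, isOcc_of_prefix hQR hRi, isOcc_of_prefix hQR hRj,
    fun k hk1 hk2 hQk => hPgap k hk1 hk2 (isOcc_of_prefix hPQ hQk)⟩
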